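/- For any probability vector p with decreasing components and p₂ < p₁, and any β' ≥ β ≥ 1, the vector p^(β) (with components proportional to (p_i/p₁)^β) is majorized by p^(β') (components proportional to (p_i/p₁)^{β'}). -/
import Mathlib

theorem stmt_1_aux (r k : ℕ) (hr : 0 < r) (x : Fin r → ℝ) (hx0 : ∀ i, 0 < x i)
    (hxa : Antitone x) (β β' : ℝ) (hββ' : β ≤ β') :
    ∑ i ∈ Finset.univ.filter (fun i : Fin r => (i : ℕ) < k),
        x i ^ β / (∑ j, x j ^ β)
      ≤ ∑ i ∈ Finset.univ.filter (fun i : Fin r => (i : ℕ) < k),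
        x i ^ β' / (∑ j, x j ^ β') := by
  have hS : ∀ t : ℝ, 0 < ∑ j, x j ^ t := fun t =>
    Finset.sum_pos (fun j _ => Real.rpow_pos_of_pos (hx0 j) t)
      ⟨⟨0, hr⟩, Finset.mem_univ _⟩
  have key : ∀ i j : Fin r, i ≤ j → x i ^ β * x j ^ β' ≤ x i ^ β' * x j ^ β := by
    intro i j hij
    have hji : x j ≤ x i := hxa hij
    have h1 : x j ^ β' = x j ^ β * x j ^ (β' - β) := by
      rw [← Real.rpow_add (hx0 j)]; congr 1; ring
    have h2 : x i ^ β' = x i ^ β * x i ^ (β' - β) := by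
      rw [← Real.rpow_add (hx0 i)]; congr 1; ring
    calc x i ^ β * x j ^ β' = x i ^ β * x j ^ β * x j ^ (β' - β) := by rw [h1]; ring
      _ ≤ x i ^ β * x j ^ β * x i ^ (β' - β) := by
          refine mul_le_mul_of_nonneg_left
            (Real.rpow_le_rpow (hx0 j).le hji (by linarith)) (mul_pos (Real.rpow_pos_of_pos (hx0 i) β) (Real.rpow_pos_of_pos (hx0 j) β)).le
      _ = x i ^ β' * x j ^ β := by rw [h2]; ring
  rw [← Finset.sum_div, ← Finset.sum_div, div_le_div_iff₀ (hS β) (hS β')]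
  set F := Finset.univ.filter (fun i : Fin r => (i : ℕ) < k) with hF
  set G := Finset.univ.filter (fun i : Fin r => ¬ (i : ℕ) < k) with hG
  have split : ∀ g : Fin r → ℝ, ∑ j, g j = ∑ j ∈ F, g j + ∑ j ∈ G, g j := fun g =>
    (Finset.sum_filter_add_sum_filter_not _ _ _).symm
  have hmemF : ∀ i : Fin r, i ∈ F → (i : ℕ) < k := by
    intro i hi; rw [hF, Finset.mem_filter] at hi; exact hi.2
  have hmemG : ∀ i : Fin r, i ∈ G → ¬ (i : ℕ) < k := by
    intro i hi; rw [hG, Finset.mem_filter] at hi; exact hi.2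
  calc (∑ i ∈ F, x i ^ β) * ∑ j, x j ^ β'
      = ∑ i ∈ F, ∑ j, x i ^ β * x j ^ β' := by
        rw [Finset.sum_mul]; exact Finset.sum_congr rfl fun i _ => Finset.mul_sum ..
    _ = (∑ i ∈ F, ∑ j ∈ F, x i ^ β * x j ^ β')
        + ∑ i ∈ F, ∑ j ∈ G, x i ^ β * x j ^ β' := by
        rw [← Finset.sum_add_distrib]
        exact Finset.sum_congr rfl fun i _ => split _
    _ ≤ (∑ i ∈ F, ∑ j ∈ F, x i ^ β' * x j ^ β)
        + ∑ i ∈ F, ∑ j ∈ G, x i ^ β' * x j ^ β := by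
        refine add_le_add (le_of_eq ?_) ?_
        · rw [Finset.sum_comm]
          exact Finset.sum_congr rfl fun i _ => Finset.sum_congr rfl fun j _ => mul_comm _ _
        · refine Finset.sum_le_sum fun i hi => Finset.sum_le_sum fun j hj => ?_
          have h1 := hmemF i hi
          have h2 := hmemG j hj
          exact key i j (by rw [Fin.le_def]; omega)
    _ = (∑ i ∈ F, x i ^ β') * ∑ j, x j ^ β := by
        rw [← Finset.sum_add_distrib, Finset.sum_mul]
        exact Finset.sum_congr rfl fun i _ => by rw [← split, Finset.mul_sum]

/-- For a decreasingly ordered positive probability vector `p` with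
`p₂ < p₁` and `β' ≥ β ≥ 1`, the vector `p^(β)` (components proportional to
`(p_i/p₁)^β`) is majorized by `p^(β')`: all partial sums of `p^(β)` are
bounded by those of `p^(β')`. -/
theorem stmt_1 (r : ℕ) (hr : 2 ≤ r) (p : Fin r → ℝ)
    (hpos : ∀ i, 0 < p i) (hanti : Antitone p)
    (hsum : ∑ i, p i = 1)
    (h12 : p ⟨1, by omega⟩ < p ⟨0, by omega⟩)
    (β β' : ℝ) (hβ : 1 ≤ β) (hββ' : β ≤ β') :
    ∀ k : ℕ,
      ∑ i ∈ Finset.univ.filter (fun i : Fin r => (i : ℕ) < k),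
        (p i / p ⟨0, by omega⟩) ^ β / (∑ j, (p j / p ⟨0, by omega⟩) ^ β)
      ≤ ∑ i ∈ Finset.univ.filter (fun i : Fin r => (i : ℕ) < k),
        (p i / p ⟨0, by omega⟩) ^ β' / (∑ j, (p j / p ⟨0, by omega⟩) ^ β') := by
  intro k
  have hc0 : (0:ℝ) < p ⟨0, by omega⟩ := hpos _
  exact stmt_1_aux r k (by omega) (fun i => p i / p ⟨0, by omega⟩)
    (fun i => div_pos (hpos i) hc0)
    (fun i j hij => by exact div_le_div_of_nonneg_right (hanti hij) hc0.le)
    β β' hββ'
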